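/- Let (S, T, s, t) be a Petri net with T = {τ₁, ..., τ_N} nonempty, viewed as the open Petri net P = (S →^{id} S ←^{id} S, (S, T, s, t)). Then P equals the composite G₁ ∘ G₂ ∘ ... ∘ G_N, where G_i = (S →^{id} S ←^{id} S, (S, {τ_i}, s|_{{τ_i}}, t|_{{τ_i}})) is the open Petri net retaining only the i-th transition. Moreover this decomposition is invariant under permutation of the factors: composing the G_i in any order yields the same open Petri net. -/

import Mathlib

/-- An open Petri net: a cospan of finite sets `X → S ← Y` decorated by a
Petri net with (finite) species set `S` and (finite) transition set `T`;
`src τ` and `tgt τ` are the input and output multisets of the transition `τ`. -/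
structure OpenPetri (X Y : Type) where
  S : Type
  finS : Finite S
  i : X → S
  o : Y → S
  T : Type
  finT : Finite T
  src : T → S → ℕ
  tgt : T → S → ℕ

namespace OpenPetri

/-- The transitionless open Petri net on a cospan `X → S ← Y`. -/
def trNet {X Y : Type} (S : Type) (hS : Finite S) (i : X → S) (o : Y → S) :
    OpenPetri X Y :=
  ⟨S, hS, i, o, PEmpty, inferInstance, fun t => t.elim, fun t => t.elim⟩

/-- The identity open Petri net on a finite set `S`. -/
def idNet (S : Type) (hS : Finite S) : OpenPetri S S := trNet S hS id id

/-- The relation generating the pushout of `S ← Y → S'`. -/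
def pushoutRel {Y S S' : Type} (o : Y → S) (i' : Y → S') :
    (S ⊕ S') → (S ⊕ S') → Prop :=
  fun a b => ∃ y, a = Sum.inl (o y) ∧ b = Sum.inr (i' y)

/-- Composition of open Petri nets: pushout of the underlying cospans,
disjoint union of transitions, and source/target multisets pushed forward
along the pushout maps. -/
noncomputable def comp {X Y Z : Type} (P : OpenPetri X Y) (Q : OpenPetri Y Z) :
    OpenPetri X Z where
  S := Quot (pushoutRel P.o Q.i)
  finS := by have := P.finS; have := Q.finS; exact Quot.finite _
  i := fun x => Quot.mk _ (Sum.inl (P.i x))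
  o := fun z => Quot.mk _ (Sum.inr (Q.o z))
  T := P.T ⊕ Q.T
  finT := by have := P.finT; have := Q.finT; infer_instance
  src := fun τ σ' =>
    match τ with
    | Sum.inl τ => ∑ᶠ (σ : P.S) (_ : Quot.mk (pushoutRel P.o Q.i) (Sum.inl σ) = σ'), P.src τ σ
    | Sum.inr τ => ∑ᶠ (σ : Q.S) (_ : Quot.mk (pushoutRel P.o Q.i) (Sum.inr σ) = σ'), Q.src τ σ
  tgt := fun τ σ' =>
    match τ with
    | Sum.inl τ => ∑ᶠ (σ : P.S) (_ : Quot.mk (pushoutRel P.o Q.i) (Sum.inl σ) = σ'), P.tgt τ σ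
    | Sum.inr τ => ∑ᶠ (σ : Q.S) (_ : Quot.mk (pushoutRel P.o Q.i) (Sum.inr σ) = σ'), Q.tgt τ σ

/-- Tensor (disjoint union) of open Petri nets. -/
def tensor {X Y X' Y' : Type} (P : OpenPetri X Y) (Q : OpenPetri X' Y') :
    OpenPetri (X ⊕ X') (Y ⊕ Y') where
  S := P.S ⊕ Q.S
  finS := by have := P.finS; have := Q.finS; infer_instance
  i := Sum.map P.i Q.i
  o := Sum.map P.o Q.o
  T := P.T ⊕ Q.T
  finT := by have := P.finT; have := Q.finT; infer_instance
  src := fun τ σ =>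
    match τ, σ with
    | Sum.inl τ, Sum.inl σ => P.src τ σ
    | Sum.inr τ, Sum.inr σ => Q.src τ σ
    | _, _ => 0
  tgt := fun τ σ =>
    match τ, σ with
    | Sum.inl τ, Sum.inl σ => P.tgt τ σ
    | Sum.inr τ, Sum.inr σ => Q.tgt τ σ
    | _, _ => 0

/-- Isomorphism of open Petri nets with the same feet: bijections of species
and transitions commuting with the legs and the source/target maps. -/
structure Iso {X Y : Type} (P Q : OpenPetri X Y) where
  eS : P.S ≃ Q.S
  eT : P.T ≃ Q.T
  hi : ∀ x, eS (P.i x) = Q.i x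
  ho : ∀ y, eS (P.o y) = Q.o y
  hsrc : ∀ τ σ, Q.src (eT τ) (eS σ) = P.src τ σ
  htgt : ∀ τ σ, Q.tgt (eT τ) (eS σ) = P.tgt τ σ

/-- A monically open ("mope") Petri net: both legs are injective. -/
def Monic {X Y : Type} (P : OpenPetri X Y) : Prop :=
  Function.Injective P.i ∧ Function.Injective P.o

end OpenPetri

namespace OpenPetri

/-- The single-transition open Petri net `(S →ⁱᵈ S ←ⁱᵈ S)` with one transition
having the given source and target multisets. -/
def single (S : Type) (hS : Finite S) (s t : S → ℕ) : OpenPetri S S :=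
  ⟨S, hS, id, id, PUnit, inferInstance, fun _ => s, fun _ => t⟩

/-- Composite of a list of endo-open-Petri-nets (empty list ↦ identity). -/
noncomputable def compList (S : Type) (hS : Finite S) :
    List (OpenPetri S S) → OpenPetri S S
  | [] => idNet S hS
  | P :: Ps => P.comp (compList S hS Ps)

end OpenPetri

namespace OpenPetri

/-- A net with identity legs on `S` and transition type `T`. -/
def net (S : Type) (hS : Finite S) (T : Type) (fT : Finite T)
    (s t : T → S → ℕ) : OpenPetri S S :=
  ⟨S, hS, id, id, T, fT, s, t⟩

def Iso.refl {X Y : Type} (P : OpenPetri X Y) : Iso P P :=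
  ⟨Equiv.refl _, Equiv.refl _, fun _ => rfl, fun _ => rfl,
    fun _ _ => rfl, fun _ _ => rfl⟩

def Iso.trans {X Y : Type} {P Q R : OpenPetri X Y} (f : Iso P Q) (g : Iso Q R) :
    Iso P R :=
  ⟨f.eS.trans g.eS, f.eT.trans g.eT,
    fun x => by simp [f.hi, g.hi],
    fun y => by simp [f.ho, g.ho],
    fun τ σ => by simpa using (g.hsrc (f.eT τ) (f.eS σ)).trans (f.hsrc τ σ),
    fun τ σ => by simpa using (g.htgt (f.eT τ) (f.eS σ)).trans (f.htgt τ σ)⟩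

lemma finsum_cond {α : Type} (f : α → ℕ) (c : α) (p : α → Prop)
    (h : ∀ σ, p σ ↔ σ = c) :
    (∑ᶠ (σ : α) (_ : p σ), f σ) = f c := by
  classical
  have h' : ∀ σ, p σ = (σ = c) := fun σ => propext (h σ)
  simp only [h']
  rw [finsum_eq_single _ c]
  · simp [finsum_eq_if]
  · intro x hx
    simp [finsum_eq_if, hx]

/-- In the pushout of `S ←id S id→ S`, two classes agree iff the underlying
elements agree. -/
lemma quotmk_eq_iff (S : Type) (a b : S ⊕ S) :
    Quot.mk (pushoutRel (id : S → S) (id : S → S)) a = Quot.mk _ b ↔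
      Sum.elim id id a = Sum.elim id id b := by
  have key : ∀ x : S ⊕ S, Quot.mk (pushoutRel (id : S → S) (id : S → S)) x =
      Quot.mk _ (Sum.inl (Sum.elim id id x)) := by
    rintro (x | x)
    · rfl
    · exact (Quot.sound ⟨x, rfl, rfl⟩).symm
  constructor
  · intro h
    exact congrArg (Quot.lift (Sum.elim (id : S → S) id)
      (by rintro x y ⟨z, rfl, rfl⟩; rfl)) h
  · intro h
    rw [key a, key b, h]

/-- The pushout equivalence induced by a pair of isomorphisms. -/
def pushoutEquiv {X Y Z : Type} {P P' : OpenPetri X Y} {Q Q' : OpenPetri Y Z}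
    (f : Iso P P') (g : Iso Q Q') :
    Quot (pushoutRel P.o Q.i) ≃ Quot (pushoutRel P'.o Q'.i) where
  toFun := Quot.map (Sum.map f.eS g.eS)
    (by rintro _ _ ⟨y, rfl, rfl⟩; exact ⟨y, by simp [f.ho y], by simp [g.hi y]⟩)
  invFun := Quot.map (Sum.map f.eS.symm g.eS.symm)
    (by
      rintro _ _ ⟨y, rfl, rfl⟩
      refine ⟨y, ?_, ?_⟩
      · simp only [Sum.map_inl]
        rw [(Equiv.symm_apply_eq _).2 (f.ho y).symm]
      · simp only [Sum.map_inr]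
        rw [(Equiv.symm_apply_eq _).2 (g.hi y).symm])
  left_inv := by
    refine Quot.ind ?_
    rintro (a | a) <;> simp [Quot.map]
  right_inv := by
    refine Quot.ind ?_
    rintro (a | a) <;> simp [Quot.map]

lemma pushoutEquiv_mk {X Y Z : Type} {P P' : OpenPetri X Y} {Q Q' : OpenPetri Y Z}
    (f : Iso P P') (g : Iso Q Q') (a : P.S ⊕ Q.S) :
    pushoutEquiv f g (Quot.mk _ a) = Quot.mk _ (Sum.map f.eS g.eS a) := rfl

/-- Composition respects isomorphism. -/
noncomputable def compCongr {X Y Z : Type} (P P' : OpenPetri X Y) (Q Q' : OpenPetri Y Z)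
    (f : Iso P P') (g : Iso Q Q') : Iso (P.comp Q) (P'.comp Q') where
  eS := pushoutEquiv f g
  eT := Equiv.sumCongr f.eT g.eT
  hi := fun x => by
    show Quot.mk _ (Sum.inl (f.eS (P.i x))) = Quot.mk _ (Sum.inl (P'.i x))
    rw [f.hi]
  ho := fun z => by
    show Quot.mk _ (Sum.inr (g.eS (Q.o z))) = Quot.mk _ (Sum.inr (Q'.o z))
    rw [g.ho]
  hsrc := by
    rintro (τ | τ) σ'
    · induction σ' using Quot.ind with
      | _ a =>
        show (∑ᶠ (σ : P'.S) (_ : Quot.mk (pushoutRel P'.o Q'.i) (Sum.inl σ) =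
              pushoutEquiv f g (Quot.mk _ a)), P'.src (f.eT τ) σ) =
            ∑ᶠ (σ : P.S) (_ : Quot.mk (pushoutRel P.o Q.i) (Sum.inl σ) = Quot.mk _ a),
              P.src τ σ
        rw [← finsum_comp_equiv f.eS]
        have hc : ∀ σ : P.S,
            (Quot.mk (pushoutRel P'.o Q'.i) (Sum.inl (f.eS σ)) =
              pushoutEquiv f g (Quot.mk _ a)) =
            (Quot.mk (pushoutRel P.o Q.i) (Sum.inl σ) = Quot.mk _ a) := fun σ =>
          propext ((pushoutEquiv f g).apply_eq_iff_eq (x := Quot.mk _ (Sum.inl σ)) (y := Quot.mk _ a))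
        simp only [hc, f.hsrc]
    · induction σ' using Quot.ind with
      | _ a =>
        show (∑ᶠ (σ : Q'.S) (_ : Quot.mk (pushoutRel P'.o Q'.i) (Sum.inr σ) =
              pushoutEquiv f g (Quot.mk _ a)), Q'.src (g.eT τ) σ) =
            ∑ᶠ (σ : Q.S) (_ : Quot.mk (pushoutRel P.o Q.i) (Sum.inr σ) = Quot.mk _ a),
              Q.src τ σ
        rw [← finsum_comp_equiv g.eS]
        have hc : ∀ σ : Q.S,
            (Quot.mk (pushoutRel P'.o Q'.i) (Sum.inr (g.eS σ)) =
              pushoutEquiv f g (Quot.mk _ a)) =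
            (Quot.mk (pushoutRel P.o Q.i) (Sum.inr σ) = Quot.mk _ a) := fun σ =>
          propext ((pushoutEquiv f g).apply_eq_iff_eq (x := Quot.mk _ (Sum.inr σ)) (y := Quot.mk _ a))
        simp only [hc, g.hsrc]
  htgt := by
    rintro (τ | τ) σ'
    · induction σ' using Quot.ind with
      | _ a =>
        show (∑ᶠ (σ : P'.S) (_ : Quot.mk (pushoutRel P'.o Q'.i) (Sum.inl σ) =
              pushoutEquiv f g (Quot.mk _ a)), P'.tgt (f.eT τ) σ) =
            ∑ᶠ (σ : P.S) (_ : Quot.mk (pushoutRel P.o Q.i) (Sum.inl σ) = Quot.mk _ a),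
              P.tgt τ σ
        rw [← finsum_comp_equiv f.eS]
        have hc : ∀ σ : P.S,
            (Quot.mk (pushoutRel P'.o Q'.i) (Sum.inl (f.eS σ)) =
              pushoutEquiv f g (Quot.mk _ a)) =
            (Quot.mk (pushoutRel P.o Q.i) (Sum.inl σ) = Quot.mk _ a) := fun σ =>
          propext ((pushoutEquiv f g).apply_eq_iff_eq (x := Quot.mk _ (Sum.inl σ)) (y := Quot.mk _ a))
        simp only [hc, f.htgt]
    · induction σ' using Quot.ind with
      | _ a =>
        show (∑ᶠ (σ : Q'.S) (_ : Quot.mk (pushoutRel P'.o Q'.i) (Sum.inr σ) =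
              pushoutEquiv f g (Quot.mk _ a)), Q'.tgt (g.eT τ) σ) =
            ∑ᶠ (σ : Q.S) (_ : Quot.mk (pushoutRel P.o Q.i) (Sum.inr σ) = Quot.mk _ a),
              Q.tgt τ σ
        rw [← finsum_comp_equiv g.eS]
        have hc : ∀ σ : Q.S,
            (Quot.mk (pushoutRel P'.o Q'.i) (Sum.inr (g.eS σ)) =
              pushoutEquiv f g (Quot.mk _ a)) =
            (Quot.mk (pushoutRel P.o Q.i) (Sum.inr σ) = Quot.mk _ a) := fun σ =>
          propext ((pushoutEquiv f g).apply_eq_iff_eq (x := Quot.mk _ (Sum.inr σ)) (y := Quot.mk _ a))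
        simp only [hc, g.htgt]

/-- Composing two identity-legged nets gives the net on the disjoint union of
transitions. -/
noncomputable def compNetIso (S : Type) (hS : Finite S)
    (T₁ T₂ : Type) (f₁ : Finite T₁) (f₂ : Finite T₂)
    (s₁ t₁ : T₁ → S → ℕ) (s₂ t₂ : T₂ → S → ℕ) :
    Iso ((net S hS T₁ f₁ s₁ t₁).comp (net S hS T₂ f₂ s₂ t₂))
      (net S hS (T₁ ⊕ T₂) inferInstance (Sum.elim s₁ s₂) (Sum.elim t₁ t₂)) where
  eS :=
    { toFun := Quot.lift (Sum.elim id id) (by rintro a b ⟨y, rfl, rfl⟩; rfl)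
      invFun := fun σ => Quot.mk _ (Sum.inl σ)
      left_inv := by
        refine Quot.ind ?_
        rintro (a | a)
        · rfl
        · exact Quot.sound ⟨a, rfl, rfl⟩
      right_inv := fun σ => rfl }
  eT := Equiv.refl _
  hi := fun x => rfl
  ho := fun y => rfl
  hsrc := by
    rintro (τ | τ) σ'
    · induction σ' using Quot.ind with
      | _ a =>
        show _ = ∑ᶠ (σ : S) (_ : Quot.mk (pushoutRel (id : S → S) (id : S → S)) (Sum.inl σ) = Quot.mk (pushoutRel (id : S → S) (id : S → S)) a), s₁ τ σ
        rw [finsum_cond (s₁ τ) (Sum.elim id id a) _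
          (fun σ => (quotmk_eq_iff S (Sum.inl σ) a).trans (by simp))]
        rfl
    · induction σ' using Quot.ind with
      | _ a =>
        show _ = ∑ᶠ (σ : S) (_ : Quot.mk (pushoutRel (id : S → S) (id : S → S)) (Sum.inr σ) = Quot.mk (pushoutRel (id : S → S) (id : S → S)) a), s₂ τ σ
        rw [finsum_cond (s₂ τ) (Sum.elim id id a) _
          (fun σ => (quotmk_eq_iff S (Sum.inr σ) a).trans (by simp))]
        rfl
  htgt := by
    rintro (τ | τ) σ'
    · induction σ' using Quot.ind with
      | _ a =>
        show _ = ∑ᶠ (σ : S) (_ : Quot.mk (pushoutRel (id : S → S) (id : S → S)) (Sum.inl σ) = Quot.mk (pushoutRel (id : S → S) (id : S → S)) a), t₁ τ σ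
        rw [finsum_cond (t₁ τ) (Sum.elim id id a) _
          (fun σ => (quotmk_eq_iff S (Sum.inl σ) a).trans (by simp))]
        rfl
    · induction σ' using Quot.ind with
      | _ a =>
        show _ = ∑ᶠ (σ : S) (_ : Quot.mk (pushoutRel (id : S → S) (id : S → S)) (Sum.inr σ) = Quot.mk (pushoutRel (id : S → S) (id : S → S)) a), t₂ τ σ
        rw [finsum_cond (t₂ τ) (Sum.elim id id a) _
          (fun σ => (quotmk_eq_iff S (Sum.inr σ) a).trans (by simp))]
        rfl

/-- Relabelling transitions along an equivalence gives isomorphic nets. -/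
def netTransport (S : Type) (hS : Finite S) {T T' : Type}
    (fT : Finite T) (fT' : Finite T')
    (s t : T → S → ℕ) (s' t' : T' → S → ℕ) (e : T ≃ T')
    (hs : ∀ τ, s' (e τ) = s τ) (ht : ∀ τ, t' (e τ) = t τ) :
    Iso (net S hS T fT s t) (net S hS T' fT' s' t') :=
  ⟨Equiv.refl _, e, fun _ => rfl, fun _ => rfl,
    fun τ σ => by show s' (e τ) σ = s τ σ; rw [hs τ], fun τ σ => by show t' (e τ) σ = t τ σ; rw [ht τ]⟩

/-- `PUnit ⊕ Fin n ≃ Fin (n+1)` sending the point to `0` and `k` to `k+1`. -/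
def punitSumFin (n : ℕ) : PUnit ⊕ Fin n ≃ Fin (n + 1) where
  toFun := Sum.elim (fun _ => 0) Fin.succ
  invFun := fun j => Fin.cases (Sum.inl PUnit.unit) Sum.inr j
  left_inv := by rintro (⟨⟩ | k) <;> simp
  right_inv := by
    intro j
    refine Fin.cases ?_ ?_ j <;> simp

/-- The composite of a list of single-transition nets is the net whose
transitions are indexed by the list. -/
noncomputable def compListIso (S : Type) (hS : Finite S) :
    ∀ L : List ((S → ℕ) × (S → ℕ)),
      Iso (compList S hS (L.map fun p => single S hS p.1 p.2))
        (net S hS (Fin L.length) inferInstance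
          (fun k => (L.get k).1) (fun k => (L.get k).2))
  | [] =>
      ⟨Equiv.refl _, (Equiv.equivPEmpty (Fin 0)).symm.symm.symm, fun _ => rfl, fun _ => rfl,
        fun τ _ => τ.elim, fun τ _ => τ.elim⟩
  | p :: L =>
      let ih := compListIso S hS L
      let step1 : Iso (compList S hS ((p :: L).map fun q => single S hS q.1 q.2))
          ((net S hS PUnit inferInstance (fun _ => p.1) (fun _ => p.2)).comp
            (net S hS (Fin L.length) inferInstance
              (fun k => (L.get k).1) (fun k => (L.get k).2))) :=
        compCongr _ _ _ _ (Iso.refl _) ih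
      let step2 := compNetIso S hS PUnit (Fin L.length) inferInstance inferInstance
        (fun _ => p.1) (fun _ => p.2) (fun k => (L.get k).1) (fun k => (L.get k).2)
      let step3 : Iso (net S hS (PUnit ⊕ Fin L.length) inferInstance
            (Sum.elim (fun _ => p.1) fun k => (L.get k).1)
            (Sum.elim (fun _ => p.2) fun k => (L.get k).2))
          (net S hS (Fin (p :: L).length) inferInstance
            (fun k => (((p :: L).get k)).1) (fun k => (((p :: L).get k)).2)) :=
        netTransport S hS _ _ _ _ _ _ (punitSumFin L.length)
          (by rintro (⟨⟩ | k) <;> rfl) (by rintro (⟨⟩ | k) <;> rfl)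
      (step1.trans step2).trans step3

end OpenPetri

open OpenPetri in
/-- A Petri net `(S, {τ₁,…,τ_N}, s, t)` with identity legs equals the composite
`G₁ ∘ ⋯ ∘ G_N` of its single-transition open Petri nets, and this holds for any
permutation of the factors: composing the `G_i` in any order yields the same
(i.e. an isomorphic) open Petri net. -/
theorem stmt_10 (S : Type) (hS : Finite S) (N : ℕ) (hN : 0 < N)
    (s t : Fin N → S → ℕ) :
    ∀ π : Equiv.Perm (Fin N),
      Nonempty (OpenPetri.Iso
        (compList S hS ((List.finRange N).map fun k => single S hS (s (π k)) (t (π k))))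
        (⟨S, hS, id, id, Fin N, inferInstance, s, t⟩ : OpenPetri S S)) := by
  intro π
  have hmap : ((List.finRange N).map fun k => single S hS (s (π k)) (t (π k))) =
      (((List.finRange N).map fun k => (s (π k), t (π k))).map
        fun p => single S hS p.1 p.2) := by
    simp [List.map_map, Function.comp]
  rw [hmap]
  set L : List ((S → ℕ) × (S → ℕ)) :=
    (List.finRange N).map (fun k => (s (π k), t (π k))) with hL
  have hlen : L.length = N := by simp [hL]
  refine ⟨(compListIso S hS L).trans
    (netTransport S hS _ _ _ _ s t ((finCongr hlen).trans π) ?_ ?_)⟩ <;>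
  · intro τ
    simp [hL, List.getElem_map, List.get_finRange, finCongr]
    rfl
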